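/- In the L^k-vector presentation via noncommutative generating functions: for a graded poset P of rank n+1 with Υ(a,b) = ∑_{S⊆[1,n]} f_S(P) u_S (where u_S = u_1⋯u_n with u_i = a if i∉S and u_i = b if i∈S), substituting a = e and b = (c−e)/(2k) yields Υ(e,(c−e)/(2k)) = ∑_{T⊆[1,n]} L^{k,n+1}_T(P) v_T, where v_T = v_1⋯v_n with v_i = c if i∉T and v_i = e if i∈T. -/

import Mathlib

open scoped Classical

attribute [local instance] Fintype.ofFinite

/-- A rank function making a bounded poset graded of rank `n+1`. -/
def IsGraded (P : Type) [PartialOrder P] [BoundedOrder P] (ρ : P → ℕ) (n : ℕ) : Prop :=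
  ρ ⊥ = 0 ∧ ρ ⊤ = n + 1 ∧ ∀ x y : P, x ⋖ y → ρ y = ρ x + 1

/-- A poset is `r`-thick if every nonempty open interval has at least `r` elements. -/
def RThick (P : Type) [PartialOrder P] [Fintype P] (r : ℕ) : Prop :=
  ∀ x y : P, x < y → (∃ z, x < z ∧ z < y) →
    r ≤ (Finset.univ.filter fun z => x < z ∧ z < y).card

/-- The flag number `f_S(P)`: the number of chains of `P` whose set of ranks is `S`. -/
noncomputable def flagNum {P : Type} [PartialOrder P] [Fintype P] (ρ : P → ℕ)
    (S : Finset ℕ) : ℕ :=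
  (Finset.univ.filter fun c : Finset P =>
    IsChain (· ≤ ·) (c : Set P) ∧ c.image ρ = S ∧ c.card = S.card).card

/-- The flag number `f_S([x,y])` of the interval `[x,y]`, with ranks relative to `x`. -/
noncomputable def flagNumI {P : Type} [PartialOrder P] [Fintype P] (ρ : P → ℕ)
    (x y : P) (S : Finset ℕ) : ℕ :=
  (Finset.univ.filter fun c : Finset P =>
    IsChain (· ≤ ·) (c : Set P) ∧ (∀ z ∈ c, x < z ∧ z < y) ∧
      c.image (fun z => ρ z - ρ x) = S ∧ c.card = S.card).card

/-- The `k`-Möbius function `μ_k([x,y])`. -/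
noncomputable def muk {P : Type} [PartialOrder P] [Fintype P] (k : ℝ) (x : P) (y : P) : ℝ :=
  if x = y then 1
  else -1 - (1/k) * ∑ z ∈ (Finset.univ.filter fun z => x < z ∧ z < y).attach,
    muk k x z.val
termination_by (Finset.univ.filter fun w => w < y).card
decreasing_by
  have hz : (z : P) < y := (Finset.mem_filter.mp z.2).2.2
  apply Finset.card_lt_card
  rw [Finset.ssubset_iff_of_subset]
  · exact ⟨z, Finset.mem_filter.mpr ⟨Finset.mem_univ _, hz⟩,
      fun hc => absurd (Finset.mem_filter.mp hc).2 (lt_irrefl _)⟩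
  · intro w hw
    exact Finset.mem_filter.mpr ⟨Finset.mem_univ _, (Finset.mem_filter.mp hw).2.trans hz⟩

/-- The ordinary Möbius function of a finite poset. -/
noncomputable def mobius {P : Type} [PartialOrder P] [Fintype P] (x : P) (y : P) : ℤ :=
  if x = y then 1
  else -∑ z ∈ (Finset.univ.filter fun z => x ≤ z ∧ z < y).attach, mobius x z.val
termination_by (Finset.univ.filter fun w => w < y).card
decreasing_by
  have hz : (z : P) < y := (Finset.mem_filter.mp z.2).2.2
  apply Finset.card_lt_card
  rw [Finset.ssubset_iff_of_subset]
  · exact ⟨z, Finset.mem_filter.mpr ⟨Finset.mem_univ _, hz⟩,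
      fun hc => absurd (Finset.mem_filter.mp hc).2 (lt_irrefl _)⟩
  · intro w hw
    exact Finset.mem_filter.mpr ⟨Finset.mem_univ _, (Finset.mem_filter.mp hw).2.trans hz⟩

/-- A graded poset is `k`-Eulerian when `μ_k([x,y]) = (-1)^{ρ(y)-ρ(x)}` on every interval. -/
def IsKEulerian (P : Type) [PartialOrder P] [Fintype P] (ρ : P → ℕ) (k : ℝ) : Prop :=
  ∀ x y : P, x ≤ y → muk k x y = (-1 : ℝ) ^ (ρ y - ρ x)

/-- The flag `L^k` vector of a poset of rank `n+1`. -/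
noncomputable def Lk {P : Type} [PartialOrder P] [Fintype P] (k : ℝ) (n : ℕ) (ρ : P → ℕ)
    (S : Finset ℕ) : ℝ :=
  (-1 : ℝ) ^ (n - S.card) *
    ∑ T ∈ (Finset.Icc 1 n).powerset.filter (fun T => Finset.Icc 1 n \ S ⊆ T),
      (-(1/(2*k))) ^ T.card * (flagNum ρ T : ℝ)

/-- The flag `L^k` vector of an interval `[x,y]` of rank `n+1`. -/
noncomputable def LkI {P : Type} [PartialOrder P] [Fintype P] (k : ℝ) (n : ℕ) (ρ : P → ℕ)
    (x y : P) (S : Finset ℕ) : ℝ :=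
  (-1 : ℝ) ^ (n - S.card) *
    ∑ T ∈ (Finset.Icc 1 n).powerset.filter (fun T => Finset.Icc 1 n \ S ⊆ T),
      (-(1/(2*k))) ^ T.card * (flagNumI ρ x y T : ℝ)

/-- A set is even if it is a disjoint union of intervals of even cardinality. -/
def IsEvenSet (S : Finset ℕ) : Prop :=
  ∃ J : Finset (ℕ × ℕ),
    S = J.biUnion (fun p => Finset.Icc p.1 p.2) ∧
    (∀ p ∈ J, p.1 ≤ p.2 ∧ Even (p.2 + 1 - p.1)) ∧
    (∀ p ∈ J, ∀ q ∈ J, p ≠ q → Disjoint (Finset.Icc p.1 p.2) (Finset.Icc q.1 q.2))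

/-- The horizontal `r`-fold duplication `D^r P`. -/
inductive Dup (P : Type) [PartialOrder P] [BoundedOrder P] (r : ℕ) : Type where
  | bot : Dup P r
  | top : Dup P r
  | mid : {x : P // x ≠ ⊥ ∧ x ≠ ⊤} → Fin r → Dup P r

namespace Dup

variable {P : Type} [PartialOrder P] [BoundedOrder P] {r : ℕ}

def le : Dup P r → Dup P r → Prop
  | .bot, _ => True
  | .mid _ _, .bot => False
  | .mid x i, .mid y j => (x = y ∧ i = j) ∨ (x : P) < (y : P)
  | .mid _ _, .top => True
  | .top, .top => True
  | .top, _ => False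

instance : PartialOrder (Dup P r) where
  le := Dup.le
  le_refl a := by cases a with
    | bot => trivial
    | top => trivial
    | mid x i => exact Or.inl ⟨rfl, rfl⟩
  le_trans a b c hab hbc := by
    cases a with
    | bot => trivial
    | top =>
      cases b with
      | top =>
        cases c with
        | top => trivial
        | bot => exact hbc.elim
        | mid _ _ => exact hbc.elim
      | bot => exact hab.elim
      | mid _ _ => exact hab.elim
    | mid x i =>
      cases b with
      | bot => exact hab.elim
      | top =>
        cases c with
        | top => trivial
        | bot => exact hbc.elim
        | mid _ _ => exact hbc.elim
      | mid y j =>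
        cases c with
        | bot => exact hbc.elim
        | top => trivial
        | mid z l =>
          rcases hab with ⟨rfl, rfl⟩ | h1
          · exact hbc
          · rcases hbc with ⟨rfl, rfl⟩ | h2
            · exact Or.inr h1
            · exact Or.inr (h1.trans h2)
  le_antisymm a b hab hba := by
    cases a with
    | bot =>
      cases b with
      | bot => rfl
      | top => exact hba.elim
      | mid _ _ => exact hba.elim
    | top =>
      cases b with
      | top => rfl
      | bot => exact hab.elim
      | mid _ _ => exact hab.elim
    | mid x i =>
      cases b with
      | bot => exact hab.elim
      | top => exact hba.elim
      | mid y j =>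
        rcases hab with ⟨rfl, rfl⟩ | h1
        · rfl
        · rcases hba with ⟨rfl, rfl⟩ | h2
          · exact absurd h1 (lt_irrefl _)
          · exact absurd (h1.trans h2) (lt_irrefl _)

instance : BoundedOrder (Dup P r) where
  top := .top
  bot := .bot
  le_top a := by cases a <;> trivial
  bot_le a := trivial

instance [Finite P] : Finite (Dup P r) :=
  Finite.of_injective
    (fun a : Dup P r =>
      (match a with
        | .bot => none
        | .top => some none
        | .mid x i => some (some (x, i)) :
        Option (Option ({x : P // x ≠ ⊥ ∧ x ≠ ⊤} × Fin r))))
    (by intro a b h; cases a <;> cases b <;> simp_all)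

/-- The rank function of `D^r P`, where `P` has rank `n+1`. -/
def rank (ρ : P → ℕ) (n : ℕ) : Dup P r → ℕ
  | .bot => 0
  | .top => n + 1
  | .mid x _ => ρ x.val

/-- `a ∈ D^r P` is a copy of `x ∈ P`. -/
def IsCopy (a : Dup P r) (x : P) : Prop :=
  (x = ⊥ ∧ a = .bot) ∨ (x = ⊤ ∧ a = .top) ∨ ∃ h i, a = .mid ⟨x, h⟩ i

end Dup

/-- The generator `c` of Stanley's `ce`-index algebra. -/
noncomputable def cgen : FreeAlgebra ℝ Bool := FreeAlgebra.ι ℝ true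

/-- The generator `e` of Stanley's `ce`-index algebra. -/
noncomputable def egen : FreeAlgebra ℝ Bool := FreeAlgebra.ι ℝ false

/-- The noncommutative flag-vector generating function `Υ(a,b)`. -/
noncomputable def Upsilon {P : Type} [PartialOrder P] [Fintype P] (n : ℕ) (ρ : P → ℕ)
    (a b : FreeAlgebra ℝ Bool) : FreeAlgebra ℝ Bool :=
  ∑ S ∈ (Finset.Icc 1 n).powerset, (flagNum ρ S : ℝ) •
    (List.ofFn fun i : Fin n => if (i : ℕ) + 1 ∈ S then b else a).prod


private lemma icc_succ (n : ℕ) : Finset.Icc 1 (n+1) = insert (n+1) (Finset.Icc 1 n) :=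
  (Finset.insert_Icc_right_eq_Icc_add_one (by omega)).symm

private lemma notmem_icc (n : ℕ) : n + 1 ∉ Finset.Icc 1 n := by simp

/-- word with `z` at positions in `S`, `w` elsewhere -/
noncomputable def wrd (n : ℕ) (S : Finset ℕ) (z w : FreeAlgebra ℝ Bool) : FreeAlgebra ℝ Bool :=
  (List.ofFn fun i : Fin n => if (i : ℕ) + 1 ∈ S then z else w).prod

lemma wrd_succ (n : ℕ) (S : Finset ℕ) (z w : FreeAlgebra ℝ Bool) :
    wrd (n+1) S z w = wrd n S z w * (if n + 1 ∈ S then z else w) := by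
  unfold wrd
  rw [List.ofFn_succ', List.prod_concat]
  simp [Fin.coe_castSucc, Fin.val_last]

lemma wrd_insert (n : ℕ) (S : Finset ℕ) (z w : FreeAlgebra ℝ Bool) :
    wrd n (insert (n+1) S) z w = wrd n S z w := by
  unfold wrd
  refine congrArg List.prod (congrArg List.ofFn (funext fun i => ?_))
  have h : (i : ℕ) + 1 ≠ n + 1 := by omega
  simp [Finset.mem_insert, h, show (i : ℕ) ≠ n by omega]

/-- the coefficient in the L^k expansion, abstracted -/
noncomputable def Cf (κ : ℝ) (n : ℕ) (F : Finset ℕ → ℝ) (T : Finset ℕ) : ℝ :=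
  (-1 : ℝ) ^ (n - T.card) *
    ∑ U ∈ (Finset.Icc 1 n).powerset.filter (fun U => Finset.Icc 1 n \ T ⊆ U),
      (-κ) ^ U.card * F U

lemma Cf_not (κ : ℝ) (n : ℕ) (F : Finset ℕ → ℝ) (T : Finset ℕ)
    (hT : T ∈ (Finset.Icc 1 n).powerset) :
    Cf κ (n+1) F T = κ * Cf κ n (fun S => F (insert (n+1) S)) T := by
  have hTsub : T ⊆ Finset.Icc 1 n := Finset.mem_powerset.mp hT
  have hTcard : T.card ≤ n := by
    have := Finset.card_le_card hTsub
    simpa [Nat.card_Icc] using this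
  have hnT : n + 1 ∉ T := fun h => notmem_icc n (hTsub h)
  unfold Cf
  rw [Finset.sum_filter, Finset.sum_filter, icc_succ,
    Finset.sum_powerset_insert (notmem_icc n)]
  have h1 : ∑ U ∈ (Finset.Icc 1 n).powerset,
      (if insert (n+1) (Finset.Icc 1 n) \ T ⊆ U then (-κ) ^ U.card * F U else 0) = 0 := by
    refine Finset.sum_eq_zero fun U hU => ?_
    have hnU : n + 1 ∉ U := fun h => notmem_icc n ((Finset.mem_powerset.mp hU) h)
    rw [if_neg]
    intro hsub
    exact hnU (hsub (Finset.mem_sdiff.mpr ⟨Finset.mem_insert_self _ _, hnT⟩))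
  have h2 : ∑ U ∈ (Finset.Icc 1 n).powerset,
      (if insert (n+1) (Finset.Icc 1 n) \ T ⊆ insert (n+1) U then
        (-κ) ^ (insert (n+1) U).card * F (insert (n+1) U) else 0)
      = (-κ) * ∑ U ∈ (Finset.Icc 1 n).powerset,
          (if Finset.Icc 1 n \ T ⊆ U then (-κ) ^ U.card * F (insert (n+1) U) else 0) := by
    rw [Finset.mul_sum]
    refine Finset.sum_congr rfl fun U hU => ?_
    have hUsub : U ⊆ Finset.Icc 1 n := Finset.mem_powerset.mp hU
    have hnU : n + 1 ∉ U := fun h => notmem_icc n (hUsub h)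
    have hcard : (insert (n+1) U).card = U.card + 1 := Finset.card_insert_of_notMem hnU
    have hcond : (insert (n+1) (Finset.Icc 1 n) \ T ⊆ insert (n+1) U) ↔
        (Finset.Icc 1 n \ T ⊆ U) := by
      constructor
      · intro h a ha
        have ha' := Finset.mem_sdiff.mp ha
        have hane : a ≠ n + 1 := fun he => notmem_icc n (he ▸ ha'.1)
        have := h (Finset.mem_sdiff.mpr ⟨Finset.mem_insert_of_mem ha'.1, ha'.2⟩)
        exact (Finset.mem_insert.mp this).resolve_left hane
      · intro h a ha
        have ha' := Finset.mem_sdiff.mp ha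
        rcases Finset.mem_insert.mp ha'.1 with he | hm
        · exact he ▸ Finset.mem_insert_self _ _
        · exact Finset.mem_insert_of_mem (h (Finset.mem_sdiff.mpr ⟨hm, ha'.2⟩))
    simp only [hcard, hcond]
    split_ifs with hc
    · ring
    · ring
  rw [h1, h2, ← Finset.sum_filter]
  have hpow : (n + 1 - T.card) = (n - T.card) + 1 := by omega
  rw [hpow, pow_succ]
  ring

lemma Cf_mem (κ : ℝ) (n : ℕ) (F : Finset ℕ → ℝ) (T : Finset ℕ)
    (hT : T ∈ (Finset.Icc 1 n).powerset) :
    Cf κ (n+1) F (insert (n+1) T) =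
      Cf κ n F T - κ * Cf κ n (fun S => F (insert (n+1) S)) T := by
  have hTsub : T ⊆ Finset.Icc 1 n := Finset.mem_powerset.mp hT
  have hnT : n + 1 ∉ T := fun h => notmem_icc n (hTsub h)
  have hsd : insert (n+1) (Finset.Icc 1 n) \ insert (n+1) T = Finset.Icc 1 n \ T := by
    ext a
    simp only [Finset.mem_sdiff, Finset.mem_insert]
    constructor
    · rintro ⟨h1 | h1, h2⟩
      · exact absurd (Or.inl h1) h2
      · exact ⟨h1, fun h => h2 (Or.inr h)⟩
    · rintro ⟨h1, h2⟩
      refine ⟨Or.inr h1, ?_⟩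
      rintro (he | hm)
      · exact notmem_icc n (he ▸ h1)
      · exact h2 hm
  have hcard : (insert (n+1) T).card = T.card + 1 := Finset.card_insert_of_notMem hnT
  unfold Cf
  rw [icc_succ, hsd, hcard, Finset.sum_filter, Finset.sum_powerset_insert (notmem_icc n)]
  have h2 : ∑ U ∈ (Finset.Icc 1 n).powerset,
      (if Finset.Icc 1 n \ T ⊆ insert (n+1) U then
        (-κ) ^ (insert (n+1) U).card * F (insert (n+1) U) else 0)
      = (-κ) * ∑ U ∈ (Finset.Icc 1 n).powerset,
          (if Finset.Icc 1 n \ T ⊆ U then (-κ) ^ U.card * F (insert (n+1) U) else 0) := by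
    rw [Finset.mul_sum]
    refine Finset.sum_congr rfl fun U hU => ?_
    have hUsub : U ⊆ Finset.Icc 1 n := Finset.mem_powerset.mp hU
    have hnU : n + 1 ∉ U := fun h => notmem_icc n (hUsub h)
    have hcardU : (insert (n+1) U).card = U.card + 1 := Finset.card_insert_of_notMem hnU
    have hcond : (Finset.Icc 1 n \ T ⊆ insert (n+1) U) ↔ (Finset.Icc 1 n \ T ⊆ U) := by
      constructor
      · intro h a ha
        have ha' := Finset.mem_sdiff.mp ha
        have hane : a ≠ n + 1 := fun he => notmem_icc n (he ▸ ha'.1)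
        exact (Finset.mem_insert.mp (h ha)).resolve_left hane
      · intro h a ha
        exact Finset.mem_insert_of_mem (h ha)
    simp only [hcardU, hcond]
    split_ifs with hc
    · ring
    · ring
  rw [h2, ← Finset.sum_filter, ← Finset.sum_filter]
  have hpow : (n + 1 - (T.card + 1)) = n - T.card := by omega
  rw [hpow]
  ring

lemma key (κ : ℝ) (x y : FreeAlgebra ℝ Bool) (n : ℕ) (F : Finset ℕ → ℝ) :
    ∑ S ∈ (Finset.Icc 1 n).powerset, F S • wrd n S (κ • (x - y)) y
    = ∑ T ∈ (Finset.Icc 1 n).powerset, Cf κ n F T • wrd n T y x := by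
  induction n generalizing F with
  | zero => simp [Cf, wrd]
  | succ n ih =>
    rw [icc_succ, Finset.sum_powerset_insert (notmem_icc n),
      Finset.sum_powerset_insert (notmem_icc n)]
    have hL1 : ∑ S ∈ (Finset.Icc 1 n).powerset, F S • wrd (n+1) S (κ • (x - y)) y
        = (∑ S ∈ (Finset.Icc 1 n).powerset, F S • wrd n S (κ • (x - y)) y) * y := by
      rw [Finset.sum_mul]
      refine Finset.sum_congr rfl fun S hS => ?_
      have hnS : n + 1 ∉ S := fun h => notmem_icc n (Finset.mem_powerset.mp hS h)
      rw [wrd_succ, if_neg hnS, smul_mul_assoc]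
    have hL2 : ∑ S ∈ (Finset.Icc 1 n).powerset,
          F (insert (n+1) S) • wrd (n+1) (insert (n+1) S) (κ • (x - y)) y
        = (∑ S ∈ (Finset.Icc 1 n).powerset,
            F (insert (n+1) S) • wrd n S (κ • (x - y)) y) * (κ • (x - y)) := by
      rw [Finset.sum_mul]
      refine Finset.sum_congr rfl fun S hS => ?_
      rw [wrd_succ, wrd_insert, if_pos (Finset.mem_insert_self _ _), smul_mul_assoc]
    rw [hL1, hL2, ih, ih]
    have hR1 : ∑ T ∈ (Finset.Icc 1 n).powerset, Cf κ (n+1) F T • wrd (n+1) T y x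
        = ∑ T ∈ (Finset.Icc 1 n).powerset,
            (κ * Cf κ n (fun S => F (insert (n+1) S)) T) • (wrd n T y x * x) := by
      refine Finset.sum_congr rfl fun T hT => ?_
      have hnT : n + 1 ∉ T := fun h => notmem_icc n (Finset.mem_powerset.mp hT h)
      rw [wrd_succ, if_neg hnT, Cf_not κ n F T hT]
    have hR2 : ∑ T ∈ (Finset.Icc 1 n).powerset,
          Cf κ (n+1) F (insert (n+1) T) • wrd (n+1) (insert (n+1) T) y x
        = ∑ T ∈ (Finset.Icc 1 n).powerset,
            (Cf κ n F T - κ * Cf κ n (fun S => F (insert (n+1) S)) T) • (wrd n T y x * y) := by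
      refine Finset.sum_congr rfl fun T hT => ?_
      rw [wrd_succ, wrd_insert, if_pos (Finset.mem_insert_self _ _), Cf_mem κ n F T hT]
    rw [hR1, hR2, Finset.sum_mul, Finset.sum_mul, ← Finset.sum_add_distrib,
      ← Finset.sum_add_distrib]
    refine Finset.sum_congr rfl fun T hT => ?_
    simp only [smul_mul_assoc, mul_smul_comm, mul_sub, smul_sub, sub_smul, add_smul, mul_smul]
    module

/-- `Υ(e,(c-e)/(2k)) = ∑_T L^{k,n+1}_T(P) v_T`. -/
theorem upsilon_eq_Lk {P : Type} [PartialOrder P] [BoundedOrder P] [Finite P]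
    (n : ℕ) (ρ : P → ℕ) (hP : IsGraded P ρ n) (k : ℝ) (hk : 0 < k) :
    Upsilon n ρ egen ((2 * k)⁻¹ • (cgen - egen)) =
      ∑ T ∈ (Finset.Icc 1 n).powerset, Lk k n ρ T •
        (List.ofFn fun i : Fin n => if (i : ℕ) + 1 ∈ T then egen else cgen).prod := by
  have h := key ((2*k)⁻¹) cgen egen n (fun S => (flagNum ρ S : ℝ))
  simp only [wrd, Cf] at h
  simp only [Upsilon, Lk, one_div]
  exact h
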